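/- Let R be a po-ring and let A be a partially ordered right R-module. If R is right po-coherent and A is finitely po-presented, then A is po-coherent. -/

import Mathlib

/-- A *po-ring*: a ring equipped with a partial order such that addition is
translation-invariant, multiplication by nonnegative elements (on either side) is monotone,
the ring is directed (every element is a difference of two nonnegative elements),
and `0 ≤ 1`. -/
class PORing (R : Type*) extends Ring R, PartialOrder R where
  add_le_add_right' : ∀ a b : R, a ≤ b → ∀ c : R, a + c ≤ b + c
  mul_le_mul_of_nonneg_right' : ∀ a b c : R, a ≤ b → 0 ≤ c → a * c ≤ b * c
  mul_le_mul_of_nonneg_left' : ∀ a b c : R, a ≤ b → 0 ≤ c → c * a ≤ c * b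
  directed' : ∀ x : R, ∃ y z : R, 0 ≤ y ∧ 0 ≤ z ∧ x = y - z
  zero_le_one' : (0 : R) ≤ 1

/-- A *partially ordered right module* over a po-ring `R`: an additive abelian group with a
right `R`-action `rsmul` (written on the right, so `rsmul a ξ` is `aξ`), with the usual
right-module axioms, such that addition is translation-invariant and
`0 ≤ a`, `0 ≤ ξ` imply `0 ≤ aξ`. -/
class PORightModule (R : Type*) [PORing R] (A : Type*) [AddCommGroup A] [PartialOrder A] where
  rsmul : A → R → A
  add_rsmul : ∀ (a b : A) (r : R), rsmul (a + b) r = rsmul a r + rsmul b r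
  rsmul_add : ∀ (a : A) (r s : R), rsmul a (r + s) = rsmul a r + rsmul a s
  rsmul_mul : ∀ (a : A) (r s : R), rsmul a (r * s) = rsmul (rsmul a r) s
  rsmul_one : ∀ a : A, rsmul a 1 = a
  add_le_add_right' : ∀ a b : A, a ≤ b → ∀ c : A, a + c ≤ b + c
  rsmul_nonneg : ∀ (a : A) (r : R), 0 ≤ a → 0 ≤ r → 0 ≤ rsmul a r

open PORightModule

/-- A po-ring is a partially ordered right module over itself. -/
instance PORing.toPORightModule (R : Type*) [PORing R] : PORightModule R R where
  rsmul := (· * ·)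
  add_rsmul := add_mul
  rsmul_add := mul_add
  rsmul_mul a r s := (mul_assoc a r s).symm
  rsmul_one := mul_one
  add_le_add_right' := PORing.add_le_add_right'
  rsmul_nonneg a r ha hr := by
    have h := PORing.mul_le_mul_of_nonneg_right' 0 a r ha hr
    simpa using h

/-- Products of partially ordered right modules, ordered coordinatewise. -/
instance Pi.instPORightModule {R : Type*} [PORing R] {ι : Type*} {A : ι → Type*}
    [∀ i, AddCommGroup (A i)] [∀ i, PartialOrder (A i)] [∀ i, PORightModule R (A i)] :
    PORightModule R (∀ i, A i) where
  rsmul x r i := rsmul (x i) r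
  add_rsmul a b r := funext fun i => add_rsmul (a i) (b i) r
  rsmul_add a r s := funext fun i => rsmul_add (a i) r s
  rsmul_mul a r s := funext fun i => rsmul_mul (a i) r s
  rsmul_one a := funext fun i => rsmul_one (a i)
  add_le_add_right' a b h c := by
    intro i
    exact PORightModule.add_le_add_right' R (a i) (b i) (h i) (c i)
  rsmul_nonneg a r ha hr := by
    intro i
    exact PORightModule.rsmul_nonneg (a i) r (ha i) hr

/-- Binary products of partially ordered right modules, ordered coordinatewise. -/
instance Prod.instPORightModule {R : Type*} [PORing R] {A B : Type*}
    [AddCommGroup A] [PartialOrder A] [PORightModule R A]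
    [AddCommGroup B] [PartialOrder B] [PORightModule R B] :
    PORightModule R (A × B) where
  rsmul x r := (rsmul x.1 r, rsmul x.2 r)
  add_rsmul a b r := by
    refine Prod.ext ?_ ?_ <;> simp [PORightModule.add_rsmul]
  rsmul_add a r s := by
    refine Prod.ext ?_ ?_ <;> simp [PORightModule.rsmul_add]
  rsmul_mul a r s := by
    refine Prod.ext ?_ ?_ <;> simp [PORightModule.rsmul_mul]
  rsmul_one a := by
    refine Prod.ext ?_ ?_ <;> simp [PORightModule.rsmul_one]
  add_le_add_right' a b h c := by
    rw [Prod.le_def] at h ⊢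
    constructor
    · simpa using PORightModule.add_le_add_right' R a.1 b.1 h.1 c.1
    · simpa using PORightModule.add_le_add_right' R a.2 b.2 h.2 c.2
  rsmul_nonneg a r ha hr := by
    rw [Prod.le_def] at ha ⊢
    constructor
    · simpa using PORightModule.rsmul_nonneg a.1 r (by simpa using ha.1) hr
    · simpa using PORightModule.rsmul_nonneg a.2 r (by simpa using ha.2) hr

section Defs

variable (R : Type*) [PORing R]

/-- The product `UX = a₁ξ₁ + ⋯ + aₙξₙ` of a row matrix `U = (a₁,…,aₙ)` with entries in `A`
and a column matrix `X = (ξ₁,…,ξₙ)ᵗ` with entries in `R`. -/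
def rowMul {A : Type*} [AddCommGroup A] [PartialOrder A] [PORightModule R A]
    {n : ℕ} (U : Fin n → A) (X : Fin n → R) : A :=
  ∑ i, rsmul (U i) (X i)

/-- A subset `S` of a partially ordered right `R`-module is a *finitely generated
`R⁺`-subsemimodule* if it is the set of all `R⁺`-linear combinations of some finite subset. -/
def IsFGConeIn {A : Type*} [AddCommGroup A] [PartialOrder A] [PORightModule R A]
    (S : Set A) : Prop :=
  ∃ (k : ℕ) (g : Fin k → A),
    S = { a | ∃ Y : Fin k → R, (∀ i, 0 ≤ Y i) ∧ a = rowMul R g Y }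

/-- `A` is *finitely related at* the row matrix `U ∈ M_{1,n}(A)` if the solution set of the
mixed system `UX ≥ 0, X ≥ 0` is a finitely generated `R⁺`-subsemimodule of `M_{n,1}(R)`. -/
def FinitelyRelatedAt {A : Type*} [AddCommGroup A] [PartialOrder A] [PORightModule R A]
    {n : ℕ} (U : Fin n → A) : Prop :=
  IsFGConeIn R {X : Fin n → R | 0 ≤ rowMul R U X ∧ ∀ i, 0 ≤ X i}

/-- `A` is *finitely po-presented at* the row matrix `U ∈ M_{1,n}(A)` if the solution set of
the system `UX ≥ 0` is a finitely generated `R⁺`-subsemimodule of `M_{n,1}(R)`. -/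
def FinitelyPoPresentedAt {A : Type*} [AddCommGroup A] [PartialOrder A] [PORightModule R A]
    {n : ℕ} (U : Fin n → A) : Prop :=
  IsFGConeIn R {X : Fin n → R | 0 ≤ rowMul R U X}

/-- A row matrix `U` is *spanning* if its entries generate `A` as a right `R`-module, i.e.
every element of `A` is an `R`-linear combination `UX` of the entries. -/
def SpanningRow {A : Type*} [AddCommGroup A] [PartialOrder A] [PORightModule R A]
    {n : ℕ} (U : Fin n → A) : Prop :=
  ∀ a : A, ∃ X : Fin n → R, a = rowMul R U X

variable (A : Type*) [AddCommGroup A] [PartialOrder A] [PORightModule R A]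

/-- `A` is *finitely po-presented* if it is finitely po-presented at some spanning row
matrix. -/
def FinitelyPoPresented : Prop :=
  ∃ (n : ℕ) (U : Fin n → A), SpanningRow R U ∧ FinitelyPoPresentedAt R U

/-- `A` is *finitely related* if it is a finitely generated right `R`-module and is finitely
related at every spanning row matrix. -/
def FinitelyRelatedMod : Prop :=
  (∃ (n : ℕ) (U : Fin n → A), SpanningRow R U) ∧
    ∀ (n : ℕ) (U : Fin n → A), SpanningRow R U → FinitelyRelatedAt R U

/-- `A` is *po-coherent* if it is finitely related at every row matrix of elements of `A`. -/
def PoCoherent : Prop :=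
  ∀ (n : ℕ) (U : Fin n → A), FinitelyRelatedAt R U

end Defs

/-- A po-ring is *right po-coherent* if it is po-coherent as a partially ordered right module
over itself. -/
def RightPoCoherent (R : Type*) [PORing R] : Prop :=
  PoCoherent R R

section Aux

variable {R : Type*} [PORing R]

lemma my_rsmul_eq_mul (a r : R) : rsmul a r = a * r := rfl

variable {A : Type*} [AddCommGroup A] [PartialOrder A] [PORightModule R A]

lemma my_rsmul_zero (r : R) : rsmul (0 : A) r = 0 := by
  have h := add_rsmul (R := R) (0 : A) 0 r
  rw [add_zero] at h
  exact (left_eq_add.mp h)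

lemma my_rsmul_zero_right (a : A) : rsmul a (0 : R) = 0 := by
  have h := rsmul_add (R := R) a 0 0
  rw [add_zero] at h
  exact (left_eq_add.mp h)

lemma my_rsmul_neg (a : A) (r : R) : rsmul (-a) r = - rsmul a r := by
  have h := add_rsmul (R := R) (-a) a r
  rw [neg_add_cancel, my_rsmul_zero] at h
  exact eq_neg_of_add_eq_zero_left h.symm

lemma my_sum_rsmul {ι : Type*} (s : Finset ι) (f : ι → A) (r : R) :
    rsmul (∑ i ∈ s, f i) r = ∑ i ∈ s, rsmul (f i) r :=
  map_sum (AddMonoidHom.mk' (fun a => rsmul a r) (fun a b => add_rsmul a b r)) f s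

lemma my_rsmul_sum {ι : Type*} (s : Finset ι) (a : A) (f : ι → R) :
    rsmul a (∑ i ∈ s, f i) = ∑ i ∈ s, rsmul a (f i) :=
  map_sum (AddMonoidHom.mk' (fun r => rsmul a r) (fun r t => rsmul_add a r t)) f s

lemma my_rowMul_apply {q N : ℕ} (H : Fin q → Fin N → R) (Y : Fin q → R) (p : Fin N) :
    rowMul R H Y p = rowMul R (fun i => H i p) Y := by
  unfold rowMul
  rw [Finset.sum_apply]
  rfl

lemma my_rowMul_rowMul {n m : ℕ} (U : Fin n → A) (W : Fin m → Fin n → R) (Z : Fin m → R) :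
    rowMul R (fun j => rowMul R U (W j)) Z = rowMul R U (rowMul R W Z) := by
  unfold rowMul
  calc ∑ j, rsmul (∑ t, rsmul (U t) (W j t)) (Z j)
      = ∑ j, ∑ t, rsmul (rsmul (U t) (W j t)) (Z j) :=
        Finset.sum_congr rfl fun j _ => my_sum_rsmul _ _ _
    _ = ∑ t, ∑ j, rsmul (U t) (W j t * Z j) := by
        rw [Finset.sum_comm]
        exact Finset.sum_congr rfl fun t _ =>
          Finset.sum_congr rfl fun j _ => (rsmul_mul (U t) (W j t) (Z j)).symm
    _ = ∑ t, rsmul (U t) ((∑ j, rsmul (W j) (Z j)) t) := by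
        refine Finset.sum_congr rfl fun t _ => ?_
        rw [Finset.sum_apply]
        exact (my_rsmul_sum _ _ _).symm

lemma my_rowMul_split {m k : ℕ} (a : Fin m → A) (b : Fin k → A) (X : Fin (m + k) → R) :
    rowMul R (Fin.append a b) X
      = rowMul R a (fun j => X (Fin.castAdd k j)) + rowMul R b (fun i => X (Fin.natAdd m i)) := by
  unfold rowMul
  rw [Fin.sum_univ_add]
  simp [Fin.append_left, Fin.append_right]

lemma my_rowMul_neg {n : ℕ} (a : Fin n → A) (X : Fin n → R) :
    rowMul R (fun i => -(a i)) X = - rowMul R a X := by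
  unfold rowMul
  rw [← Finset.sum_neg_distrib]
  exact Finset.sum_congr rfl fun i _ => my_rsmul_neg _ _

lemma my_eq_zero_iff (x : R) : x = 0 ↔ 0 ≤ x ∧ 0 ≤ -x := by
  constructor
  · rintro rfl
    simp
  · rintro ⟨h1, h2⟩
    have h3 := PORing.add_le_add_right' 0 (-x) h2 x
    rw [zero_add, neg_add_cancel] at h3
    exact le_antisymm h3 h1

lemma my_orthant (N : ℕ) :
    IsFGConeIn R {X : Fin N → R | ∀ i, 0 ≤ X i} := by
  refine ⟨N, (fun i => Pi.single i 1), ?_⟩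
  have key : ∀ X : Fin N → R, rowMul R (fun i => Pi.single i (1 : R)) X = X := by
    intro X
    funext p
    rw [my_rowMul_apply]
    unfold rowMul
    simp [my_rsmul_eq_mul, Pi.single_apply]
  ext X
  simp only [Set.mem_setOf_eq]
  constructor
  · intro h
    exact ⟨X, h, (key X).symm⟩
  · rintro ⟨Y, hY, rfl⟩
    intro i
    rw [key]
    exact hY i

lemma my_coneA (hR : RightPoCoherent R) {N : ℕ} {S : Set (Fin N → R)}
    (hS : IsFGConeIn R S) (V : Fin N → R) :
    IsFGConeIn R (S ∩ {X | 0 ≤ rowMul R V X}) := by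
  obtain ⟨k, G, rfl⟩ := hS
  have h := hR k (fun i => rowMul R V (G i))
  unfold FinitelyRelatedAt IsFGConeIn at h
  obtain ⟨l, H, hH⟩ := h
  refine ⟨l, fun s => rowMul R G (H s), ?_⟩
  ext X
  simp only [Set.mem_inter_iff, Set.mem_setOf_eq]
  constructor
  · rintro ⟨⟨Y, hY, rfl⟩, hpos⟩
    have hmem : Y ∈ {Y : Fin k → R |
        0 ≤ rowMul R (fun i => rowMul R V (G i)) Y ∧ ∀ i, 0 ≤ Y i} := by
      refine ⟨?_, hY⟩
      rw [my_rowMul_rowMul]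
      exact hpos
    rw [hH] at hmem
    obtain ⟨T, hT, hYT⟩ := hmem
    refine ⟨T, hT, ?_⟩
    rw [hYT, ← my_rowMul_rowMul]
  · rintro ⟨T, hT, rfl⟩
    have hmem : rowMul R H T ∈
        {a : Fin k → R | ∃ Y : Fin l → R, (∀ i, 0 ≤ Y i) ∧ a = rowMul R H Y} :=
      ⟨T, hT, rfl⟩
    rw [← hH] at hmem
    obtain ⟨h1, h2⟩ := hmem
    constructor
    · refine ⟨rowMul R H T, h2, ?_⟩
      rw [my_rowMul_rowMul]
    · rw [my_rowMul_rowMul (U := G), ← my_rowMul_rowMul (U := V)]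
      exact h1

lemma my_coneEq (hR : RightPoCoherent R) {N : ℕ} :
    ∀ (q : ℕ) (C : Fin q → Fin N → R),
      IsFGConeIn R {X : Fin N → R | (∀ t, rowMul R (C t) X = 0) ∧ ∀ i, 0 ≤ X i}
  | 0, C => by
      have he : {X : Fin N → R | (∀ t, rowMul R (C t) X = 0) ∧ ∀ i, 0 ≤ X i}
          = {X | ∀ i, 0 ≤ X i} := by
        ext X
        simp [Fin.elim0]
      rw [he]
      exact my_orthant N
  | q + 1, C => by
      have h1 := my_coneEq hR q (fun t => C t.succ)
      have h2 := my_coneA hR (my_coneA hR h1 (C 0)) (fun i => -(C 0 i))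
      have he : {X : Fin N → R | (∀ t, rowMul R (C t) X = 0) ∧ ∀ i, 0 ≤ X i}
          = ({X : Fin N → R | (∀ t : Fin q, rowMul R (C t.succ) X = 0) ∧ ∀ i, 0 ≤ X i}
              ∩ {X | 0 ≤ rowMul R (C 0) X}) ∩ {X | 0 ≤ rowMul R (fun i => -(C 0 i)) X} := by
        ext X
        simp only [Set.mem_inter_iff, Set.mem_setOf_eq]
        rw [my_rowMul_neg]
        constructor
        · rintro ⟨heq, hpos⟩
          refine ⟨⟨⟨fun t => heq t.succ, hpos⟩, ?_⟩, ?_⟩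
          · rw [heq 0]
          · rw [heq 0]
            simp
        · rintro ⟨⟨⟨heq, hpos⟩, ha⟩, hb⟩
          refine ⟨?_, hpos⟩
          intro t
          refine Fin.cases ?_ (fun t' => heq t') t
          exact (my_eq_zero_iff _).2 ⟨ha, hb⟩
      rw [he]
      exact h2

end Aux

/-- Let `R` be a po-ring and `A` a partially ordered right `R`-module.
If `R` is right po-coherent and `A` is finitely po-presented, then `A` is po-coherent. -/
theorem poCoherent_of_finitelyPoPresented
    (R A : Type*) [PORing R] [AddCommGroup A] [PartialOrder A] [PORightModule R A]
    (hR : RightPoCoherent R) (hA : FinitelyPoPresented R A) :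
    PoCoherent R A := by
  obtain ⟨n, U, hspan, hpp⟩ := hA
  unfold FinitelyPoPresentedAt IsFGConeIn at hpp
  obtain ⟨k, G, hG⟩ := hpp
  intro m V
  unfold FinitelyRelatedAt
  choose W hW using fun j => hspan (V j)
  have hVZ : ∀ Z : Fin m → R, rowMul R V Z = rowMul R U (rowMul R W Z) := by
    intro Z
    rw [← my_rowMul_rowMul]
    have hV : V = fun j => rowMul R U (W j) := funext hW
    rw [← hV]
  set Crow : Fin n → Fin (m + k) → R :=
    fun t => Fin.append (fun j => W j t) (fun i => -(G i t)) with hCrow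
  have hrow : ∀ (X : Fin (m + k) → R) (t : Fin n),
      rowMul R (Crow t) X
        = rowMul R W (fun j => X (Fin.castAdd k j)) t
            - rowMul R G (fun i => X (Fin.natAdd m i)) t := by
    intro X t
    rw [hCrow]
    rw [my_rowMul_split, my_rowMul_neg, my_rowMul_apply W, my_rowMul_apply G,
      sub_eq_add_neg]
  obtain ⟨l, H, hH⟩ := my_coneEq hR n Crow
  refine ⟨l, fun s j => H s (Fin.castAdd k j), ?_⟩
  have hgen : ∀ (T : Fin l → R) (j : Fin m),
      rowMul R (fun s j => H s (Fin.castAdd k j)) T j = rowMul R H T (Fin.castAdd k j) := by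
    intro T j
    rw [my_rowMul_apply, my_rowMul_apply]
  ext Z
  simp only [Set.mem_setOf_eq]
  constructor
  · rintro ⟨hpos, hZnn⟩
    have hWZ : rowMul R W Z ∈ {X : Fin n → R | 0 ≤ rowMul R U X} := by
      rw [Set.mem_setOf_eq, ← hVZ]
      exact hpos
    rw [hG] at hWZ
    obtain ⟨Y, hY, hWY⟩ := hWZ
    have hXmem : Fin.append Z Y ∈ {X : Fin (m + k) → R |
        (∀ t, rowMul R (Crow t) X = 0) ∧ ∀ i, 0 ≤ X i} := by
      constructor
      · intro t
        rw [hrow]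
        have hc : (fun j => Fin.append Z Y (Fin.castAdd k j)) = Z :=
          funext fun j => Fin.append_left Z Y j
        have hn : (fun i => Fin.append Z Y (Fin.natAdd m i)) = Y :=
          funext fun i => Fin.append_right Z Y i
        rw [hc, hn, ← hWY, sub_self]
      · intro i
        refine Fin.addCases (fun j => ?_) (fun j => ?_) i
        · rw [Fin.append_left]
          exact hZnn j
        · rw [Fin.append_right]
          exact hY j
    rw [hH] at hXmem
    obtain ⟨T, hT, hXT⟩ := hXmem
    refine ⟨T, hT, ?_⟩
    funext j
    rw [hgen, ← hXT, Fin.append_left]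
  · rintro ⟨T, hT, rfl⟩
    have hXmem : rowMul R H T ∈ {a : Fin (m + k) → R |
        ∃ Y : Fin l → R, (∀ i, 0 ≤ Y i) ∧ a = rowMul R H Y} := ⟨T, hT, rfl⟩
    rw [← hH] at hXmem
    obtain ⟨heq, hXnn⟩ := hXmem
    have hZ : rowMul R (fun s j => H s (Fin.castAdd k j)) T
        = fun j => rowMul R H T (Fin.castAdd k j) := funext fun j => hgen T j
    constructor
    · rw [hVZ]
      have hWG : rowMul R W (rowMul R (fun s j => H s (Fin.castAdd k j)) T)
          = rowMul R G (fun i => rowMul R H T (Fin.natAdd m i)) := by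
        funext t
        have := heq t
        rw [hrow] at this
        rw [my_rowMul_apply W, my_rowMul_apply G] at this ⊢
        rw [hZ]
        exact sub_eq_zero.mp this
      rw [hWG]
      have : rowMul R G (fun i => rowMul R H T (Fin.natAdd m i)) ∈
          {a : Fin n → R | ∃ Y : Fin k → R, (∀ i, 0 ≤ Y i) ∧ a = rowMul R G Y} :=
        ⟨fun i => rowMul R H T (Fin.natAdd m i), fun i => hXnn _, rfl⟩
      rw [← hG] at this
      exact this
    · intro j
      rw [hgen]
      exact hXnn _
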